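/- Let S be a finite set of Q vectors in ℝ^N, and let Φ ∈ ℝ^{M×N} be a random matrix with i.i.d. Gaussian N(0, 1/M) entries. For 0 < ε < 1/2, with probability at least 1 - 2Q·exp(-ε²M/8), every x ∈ S satisfies (1-ε)‖x‖ ≤ ‖Φx‖ ≤ (1+ε)‖x‖. -/

import Mathlib

open MeasureTheory ProbabilityTheory Real
open scoped NNReal ENNReal
set_option maxHeartbeats 1000000

lemma pdf_conv_real {v w : ℝ} (hv : 0 < v) (hw : 0 < w) (z : ℝ) :
    ∫ x : ℝ, (Real.sqrt (2 * π * v))⁻¹ * rexp (- x^2 / (2*v)) *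
      ((Real.sqrt (2 * π * w))⁻¹ * rexp (- (z - x)^2 / (2*w)))
    = (Real.sqrt (2 * π * (v+w)))⁻¹ * rexp (- z^2 / (2*(v+w))) := by
  have hvw : 0 < v + w := by linarith
  set b : ℝ := (v + w) / (2 * v * w) with hbdef
  have hb : 0 < b := by positivity
  set m : ℝ := v * z / (v + w) with hmdef
  set K : ℝ := (Real.sqrt (2 * π * v))⁻¹ * (Real.sqrt (2 * π * w))⁻¹ *
      rexp (- z^2 / (2*(v+w))) with hKdef
  have hpt : ∀ x : ℝ, (Real.sqrt (2 * π * v))⁻¹ * rexp (- x^2 / (2*v)) *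
      ((Real.sqrt (2 * π * w))⁻¹ * rexp (- (z - x)^2 / (2*w)))
      = K * rexp (- b * (x - m)^2) := by
    intro x
    have hexp : - x^2 / (2*v) + - (z - x)^2 / (2*w)
        = - z^2 / (2*(v+w)) + (- b * (x - m)^2) := by
      rw [hbdef, hmdef]; field_simp; ring
    calc (Real.sqrt (2 * π * v))⁻¹ * rexp (- x^2 / (2*v)) *
        ((Real.sqrt (2 * π * w))⁻¹ * rexp (- (z - x)^2 / (2*w)))
        = (Real.sqrt (2 * π * v))⁻¹ * (Real.sqrt (2 * π * w))⁻¹ *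
          rexp (- x^2 / (2*v) + - (z - x)^2 / (2*w)) := by rw [Real.exp_add]; ring
      _ = K * rexp (- b * (x - m)^2) := by rw [hexp, Real.exp_add, hKdef]; ring
  rw [integral_congr_ae (Filter.Eventually.of_forall hpt), integral_const_mul]
  have : ∫ x : ℝ, rexp (- b * (x - m)^2) = Real.sqrt (π / b) := by
    rw [← integral_gaussian b]
    exact integral_sub_right_eq_self (fun x => rexp (- b * x^2)) m
  rw [this, hKdef]
  rw [show (Real.sqrt (2 * π * v))⁻¹ * (Real.sqrt (2 * π * w))⁻¹ * rexp (- z^2 / (2*(v+w))) * Real.sqrt (π / b)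
    = ((Real.sqrt (2 * π * v))⁻¹ * (Real.sqrt (2 * π * w))⁻¹ * Real.sqrt (π / b)) * rexp (- z^2 / (2*(v+w))) by ring]
  congr 1
  rw [← Real.sqrt_inv, ← Real.sqrt_inv, ← Real.sqrt_mul (by positivity), ← Real.sqrt_mul (by positivity),
    ← Real.sqrt_inv]
  congr 1
  rw [hbdef]
  field_simp

lemma pdf_conv_integrable {v w : ℝ} (hv : 0 < v) (hw : 0 < w) (z : ℝ) :
    Integrable (fun x : ℝ => (Real.sqrt (2 * π * v))⁻¹ * rexp (- x^2 / (2*v)) *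
      ((Real.sqrt (2 * π * w))⁻¹ * rexp (- (z - x)^2 / (2*w)))) := by
  have hvw : 0 < v + w := by linarith
  set b : ℝ := (v + w) / (2 * v * w) with hbdef
  have hb : 0 < b := by positivity
  set m : ℝ := v * z / (v + w) with hmdef
  have hpt : ∀ x : ℝ, (Real.sqrt (2 * π * v))⁻¹ * rexp (- x^2 / (2*v)) *
      ((Real.sqrt (2 * π * w))⁻¹ * rexp (- (z - x)^2 / (2*w)))
      = ((Real.sqrt (2 * π * v))⁻¹ * (Real.sqrt (2 * π * w))⁻¹ *
      rexp (- z^2 / (2*(v+w)))) * rexp (- b * (x - m)^2) := by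
    intro x
    have hexp : - x^2 / (2*v) + - (z - x)^2 / (2*w)
        = - z^2 / (2*(v+w)) + (- b * (x - m)^2) := by
      rw [hbdef, hmdef]; field_simp; ring
    calc (Real.sqrt (2 * π * v))⁻¹ * rexp (- x^2 / (2*v)) *
        ((Real.sqrt (2 * π * w))⁻¹ * rexp (- (z - x)^2 / (2*w)))
        = (Real.sqrt (2 * π * v))⁻¹ * (Real.sqrt (2 * π * w))⁻¹ *
          rexp (- x^2 / (2*v) + - (z - x)^2 / (2*w)) := by rw [Real.exp_add]; ring
      _ = _ := by rw [hexp, Real.exp_add]; ring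
  simp only [hpt]
  exact ((integrable_exp_neg_mul_sq hb).comp_sub_right m).const_mul _

lemma my_pdfReal_eq (v : ℝ≥0) (m x : ℝ) :
    gaussianPDFReal m v x = (Real.sqrt (2 * π * v))⁻¹ * rexp (- (x - m)^2 / (2*v)) := rfl

lemma gaussianReal_conv (v w : ℝ≥0) :
    Measure.map (fun p : ℝ × ℝ => p.1 + p.2)
      ((gaussianReal 0 v).prod (gaussianReal 0 w)) = gaussianReal 0 (v + w) := by
  rcases eq_or_ne v 0 with hv | hv
  · subst hv
    rw [gaussianReal_zero_var, Measure.dirac_prod, Measure.map_map (by fun_prop) (by fun_prop)]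
    simp only [Function.comp_def, zero_add]
    rw [show (fun x : ℝ => x) = id from rfl, Measure.map_id]
  rcases eq_or_ne w 0 with hw | hw
  · subst hw
    rw [gaussianReal_zero_var, Measure.prod_dirac, Measure.map_map (by fun_prop) (by fun_prop)]
    simp only [Function.comp_def, add_zero]
    rw [show (fun x : ℝ => x) = id from rfl, Measure.map_id]
  have hvw : v + w ≠ 0 := by positivity
  have hv' : (0:ℝ) < v := by positivity
  have hw' : (0:ℝ) < w := by positivity
  ext s hs
  rw [Measure.map_apply (by fun_prop) hs, Measure.prod_apply (hs.preimage (by fun_prop))]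
  have hstep1 : ∀ x : ℝ, (gaussianReal 0 w) (Prod.mk x ⁻¹' ((fun p : ℝ × ℝ => p.1 + p.2) ⁻¹' s))
      = ∫⁻ z in s, gaussianPDF x w z := by
    intro x
    have h1 : Prod.mk x ⁻¹' ((fun p : ℝ × ℝ => p.1 + p.2) ⁻¹' s) = (fun t => x + t) ⁻¹' s := rfl
    rw [h1, ← Measure.map_apply (by fun_prop) hs, gaussianReal_map_const_add (μ := 0) x, zero_add,
      gaussianReal_apply x hw s]
  simp_rw [hstep1]
  rw [gaussianReal_of_var_ne_zero 0 hv]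
  have hjm : Measurable (fun q : ℝ × ℝ => gaussianPDF q.1 w q.2) := by
    apply Measurable.ennreal_ofReal
    simp only [my_pdfReal_eq]
    fun_prop
  have hinner_meas : Measurable (fun x : ℝ => ∫⁻ z in s, gaussianPDF x w z) := by
    exact Measurable.lintegral_prod_right' (f := fun q : ℝ × ℝ => gaussianPDF q.1 w q.2) hjm
  rw [lintegral_withDensity_eq_lintegral_mul _ (measurable_gaussianPDF 0 v) hinner_meas]
  simp only [Pi.mul_apply]
  have hswap : ∫⁻ x : ℝ, gaussianPDF 0 v x * ∫⁻ z in s, gaussianPDF x w z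
      = ∫⁻ z in s, ∫⁻ x : ℝ, gaussianPDF 0 v x * gaussianPDF x w z := by
    have : ∀ x : ℝ, gaussianPDF 0 v x * ∫⁻ z in s, gaussianPDF x w z
        = ∫⁻ z in s, gaussianPDF 0 v x * gaussianPDF x w z := by
      intro x
      rw [lintegral_const_mul _ (measurable_gaussianPDF x w)]
    simp_rw [this]
    exact lintegral_lintegral_swap ((measurable_gaussianPDF 0 v).comp measurable_fst |>.mul
      (hjm.comp (measurable_fst.prodMk measurable_snd))).aemeasurable
  rw [hswap]
  rw [gaussianReal_of_var_ne_zero 0 hvw, withDensity_apply _ hs]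
  apply setLIntegral_congr_fun hs
  intro z _
  have key : ∫⁻ x : ℝ, gaussianPDF 0 v x * gaussianPDF x w z = gaussianPDF 0 (v + w) z := by
    have hnn : ∀ x : ℝ, 0 ≤ (Real.sqrt (2 * π * (v:ℝ)))⁻¹ * rexp (- x^2 / (2*(v:ℝ))) *
        ((Real.sqrt (2 * π * (w:ℝ)))⁻¹ * rexp (- (z - x)^2 / (2*(w:ℝ)))) := by
      intro x; positivity
    have heq : ∀ x : ℝ, gaussianPDF 0 v x * gaussianPDF x w z
        = ENNReal.ofReal ((Real.sqrt (2 * π * (v:ℝ)))⁻¹ * rexp (- x^2 / (2*(v:ℝ))) *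
          ((Real.sqrt (2 * π * (w:ℝ)))⁻¹ * rexp (- (z - x)^2 / (2*(w:ℝ))))) := by
      intro x
      rw [gaussianPDF, gaussianPDF, ← ENNReal.ofReal_mul (gaussianPDFReal_nonneg 0 v x)]
      congr 1
      rw [my_pdfReal_eq, my_pdfReal_eq, sub_zero]
    simp_rw [heq]
    rw [← ofReal_integral_eq_lintegral_ofReal (pdf_conv_integrable hv' hw' z)
      (Filter.Eventually.of_forall hnn)]
    rw [pdf_conv_real hv' hw' z]
    rw [gaussianPDF, my_pdfReal_eq, sub_zero]
    push_cast
    rfl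
  exact key

section GaussSum
variable {Ω : Type*} [MeasurableSpace Ω] {μ : Measure Ω} [IsProbabilityMeasure μ]

lemma indep_add_gaussian {X Y : Ω → ℝ} (h : IndepFun X Y μ)
    (hXm : Measurable X) (hYm : Measurable Y) {v w : ℝ≥0}
    (hX : Measure.map X μ = gaussianReal 0 v) (hY : Measure.map Y μ = gaussianReal 0 w) :
    Measure.map (fun ω => X ω + Y ω) μ = gaussianReal 0 (v + w) := by
  have hp : Measure.map (fun ω => (X ω, Y ω)) μ = (Measure.map X μ).prod (Measure.map Y μ) :=
    (indepFun_iff_map_prod_eq_prod_map_map hXm.aemeasurable hYm.aemeasurable).mp h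
  have : (fun ω => X ω + Y ω) = (fun p : ℝ × ℝ => p.1 + p.2) ∘ (fun ω => (X ω, Y ω)) := rfl
  rw [this, ← Measure.map_map (by fun_prop) (hXm.prodMk hYm), hp, hX, hY, gaussianReal_conv]

lemma map_sum_gaussian {ι : Type*} (g : ι → Ω → ℝ)
    (hg : iIndepFun g μ) (hgm : ∀ i, Measurable (g i))
    (v : ι → ℝ≥0) (hgd : ∀ i, Measure.map (g i) μ = gaussianReal 0 (v i)) (s : Finset ι) :
    Measure.map (fun ω => ∑ i ∈ s, g i ω) μ = gaussianReal 0 (∑ i ∈ s, v i) := by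
  classical
  induction s using Finset.induction_on with
  | empty =>
    simp only [Finset.sum_empty]
    rw [show (fun _ : Ω => (0:ℝ)) = (fun _ => (0:ℝ)) from rfl, Measure.map_const,
      gaussianReal_zero_var]
    simp
  | @insert a s' ha ih =>
    have hind : IndepFun (∑ j ∈ s', g j) (g a) μ :=
      hg.indepFun_finsetSum_of_notMem hgm ha
    have hsm : Measurable (∑ j ∈ s', g j) := by
      have := Finset.measurable_sum s' (fun i (_ : i ∈ s') => hgm i)
      convert this using 1
      funext ω; simp [Finset.sum_apply]
    have hmap : Measure.map (∑ j ∈ s', g j) μ = gaussianReal 0 (∑ i ∈ s', v i) := by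
      have : (∑ j ∈ s', g j) = (fun ω => ∑ j ∈ s', g j ω) := by
        funext ω; simp [Finset.sum_apply]
      rw [this, ih]
    have := indep_add_gaussian hind.symm (hgm a) hsm (hgd a) hmap
    rw [Finset.sum_insert ha]
    have heq : (fun ω => ∑ i ∈ insert a s' , g i ω) = (fun ω => g a ω + (∑ j ∈ s', g j) ω) := by
      funext ω; rw [Finset.sum_insert ha]; simp [Finset.sum_apply]
    rw [heq]
    exact this

lemma integrable_exp_sq_gaussian {v : ℝ≥0} {t : ℝ} (ht : 2 * t * v < 1) :
    Integrable (fun z => rexp (t * z^2)) (gaussianReal 0 v) := by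
  rcases eq_or_ne v 0 with hv | hv
  · subst hv
    rw [gaussianReal_zero_var]
    refine ⟨(by fun_prop : Measurable fun z : ℝ => rexp (t * z^2)).aestronglyMeasurable, ?_⟩
    rw [HasFiniteIntegral, lintegral_dirac' _ (by fun_prop)]
    exact ENNReal.coe_lt_top
  · have hv' : (0:ℝ) < v := by positivity
    have hb : (0:ℝ) < 1/(2*v) - t := by
      rw [sub_pos, lt_div_iff₀ (by positivity)]
      nlinarith
    rw [gaussianReal_of_var_ne_zero 0 hv]
    have hd : (gaussianPDF 0 v) = fun x => ((Real.toNNReal (gaussianPDFReal 0 v x) : ℝ≥0) : ℝ≥0∞) := by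
      funext x; rfl
    rw [hd, integrable_withDensity_iff_integrable_smul (by
      exact (measurable_gaussianPDFReal 0 v).real_toNNReal)]
    have heq : ∀ x : ℝ, (Real.toNNReal (gaussianPDFReal 0 v x)) • rexp (t * x^2)
        = (Real.sqrt (2 * π * v))⁻¹ * rexp (-(1/(2*v) - t) * x^2) := by
      intro x
      rw [NNReal.smul_def, smul_eq_mul, Real.coe_toNNReal _ (gaussianPDFReal_nonneg 0 v x)]
      rw [gaussianPDFReal, sub_zero, mul_assoc, ← Real.exp_add]
      congr 2
      field_simp
      ring
    simp_rw [heq]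
    exact (integrable_exp_neg_mul_sq hb).const_mul _

lemma integral_exp_sq_gaussian {v : ℝ≥0} {t : ℝ} (ht : 2 * t * v < 1) :
    ∫ z, rexp (t * z^2) ∂(gaussianReal 0 v) = (Real.sqrt (1 - 2*t*v))⁻¹ := by
  rcases eq_or_ne v 0 with hv | hv
  · subst hv
    rw [gaussianReal_zero_var, integral_dirac]
    norm_num
  · have hv' : (0:ℝ) < v := by positivity
    have hb : (0:ℝ) < 1/(2*v) - t := by
      rw [sub_pos, lt_div_iff₀ (by positivity)]
      nlinarith
    rw [gaussianReal_of_var_ne_zero 0 hv]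
    have hd : (gaussianPDF 0 v) = fun x => ((Real.toNNReal (gaussianPDFReal 0 v x) : ℝ≥0) : ℝ≥0∞) := by
      funext x; rfl
    rw [hd, integral_withDensity_eq_integral_smul (by
      exact (measurable_gaussianPDFReal 0 v).real_toNNReal)]
    have heq : ∀ x : ℝ, (Real.toNNReal (gaussianPDFReal 0 v x)) • rexp (t * x^2)
        = (Real.sqrt (2 * π * v))⁻¹ * rexp (-(1/(2*v) - t) * x^2) := by
      intro x
      rw [NNReal.smul_def, smul_eq_mul, Real.coe_toNNReal _ (gaussianPDFReal_nonneg 0 v x)]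
      rw [gaussianPDFReal, sub_zero, mul_assoc, ← Real.exp_add]
      congr 2
      field_simp
      ring
    simp_rw [heq]
    rw [integral_const_mul, integral_gaussian]
    rw [← Real.sqrt_inv, ← Real.sqrt_mul (by positivity), ← Real.sqrt_inv]
    congr 1
    have h1 : (0:ℝ) < 1 - 2*t*v := by linarith
    have h1' : (1 - 2*t*(v:ℝ)) ≠ 0 := ne_of_gt h1
    have h2 : ((v:ℝ)) ≠ 0 := ne_of_gt hv'
    have h3 : (1:ℝ)/(2*(v:ℝ)) - t = (1 - 2*t*v)/(2*v) := by field_simp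
    rw [h3]
    rw [div_div_eq_mul_div, eq_comm, inv_eq_iff_eq_inv]
    have hπ : π ≠ 0 := ne_of_gt Real.pi_pos
    rw [mul_inv, inv_inv, inv_div]
    field_simp

end GaussSum

lemma unit_up {ε : ℝ} (hε0 : 0 < ε) (hε : ε < 1/2) :
    rexp (-(ε/4)*(1+ε)^2) * (Real.sqrt (1 - ε/2))⁻¹ ≤ rexp (-(ε^2)/8) := by
  have h1 : (0:ℝ) < 1 - ε/2 := by linarith
  have hcube : ε^3 ≤ ε^2/2 := by nlinarith [sq_nonneg ε]
  have hquart : ε^4 ≤ ε^3/2 := by nlinarith [pow_pos hε0 3]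
  set d : ℝ := (ε/4)*(1+ε)^2 - (ε^2)/8 with hd
  have hdpos : 0 < d := by rw [hd]; nlinarith
  have hkey : rexp (-(2*d)) ≤ 1 - ε/2 := by
    have h2 : 1 + 2*d ≤ rexp (2*d) := by
      have := Real.add_one_le_exp (2*d); linarith
    have h3 : rexp (-(2*d)) = (rexp (2*d))⁻¹ := by rw [Real.exp_neg]
    have h4 : (rexp (2*d))⁻¹ ≤ (1 + 2*d)⁻¹ := by
      apply inv_anti₀ (by linarith) h2
    have h5 : (1 + 2*d)⁻¹ ≤ 1 - ε/2 := by
      rw [inv_eq_one_div, div_le_iff₀ (by linarith)]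
      rw [hd]; nlinarith [hcube, hquart, mul_pos hε0 hε0]
    linarith [h3 ▸ h4]
  have hsq : rexp (-d) ≤ Real.sqrt (1 - ε/2) := by
    have : rexp (-(2*d)) = (rexp (-d))^2 := by
      rw [← Real.exp_nat_mul]; push_cast; congr 1; ring
    rw [← Real.sqrt_sq (le_of_lt (Real.exp_pos (-d))), ← this]
    exact Real.sqrt_le_sqrt hkey
  have hinv : (Real.sqrt (1 - ε/2))⁻¹ ≤ (rexp (-d))⁻¹ := by
    apply inv_anti₀ (Real.exp_pos _) hsq
  calc rexp (-(ε/4)*(1+ε)^2) * (Real.sqrt (1 - ε/2))⁻¹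
      ≤ rexp (-(ε/4)*(1+ε)^2) * (rexp (-d))⁻¹ := by
        apply mul_le_mul_of_nonneg_left hinv (le_of_lt (Real.exp_pos _))
    _ = rexp (-(ε^2)/8) := by
        rw [← Real.exp_neg, ← Real.exp_add]; congr 1; rw [hd]; ring

lemma unit_lo {ε : ℝ} (hε0 : 0 < ε) (hε : ε < 1/2) :
    rexp ((ε/4)*(1-ε)^2) * (Real.sqrt (1 + ε/2))⁻¹ ≤ rexp (-(ε^2)/8) := by
  have h1 : (0:ℝ) < 1 + ε/2 := by linarith
  have hcube : ε^3 ≤ ε^2/2 := by nlinarith [sq_nonneg ε]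
  have hquart : ε^4 ≤ ε^3/2 := by nlinarith [pow_pos hε0 3]
  set y : ℝ := (ε/2)*(1-ε)^2 + (ε^2)/4 with hy
  have hypos : 0 < y := by rw [hy]; nlinarith
  have hylt : y < 1 := by rw [hy]; nlinarith
  have hkey : rexp y ≤ 1 + ε/2 := by
    have h2 : 1 - y ≤ rexp (-y) := by
      have := Real.add_one_le_exp (-y); linarith
    have h3 : rexp y * (1 - y) ≤ 1 := by
      have := mul_le_mul_of_nonneg_left h2 (le_of_lt (Real.exp_pos y))
      rwa [← Real.exp_add, add_neg_cancel, Real.exp_zero] at this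
    have h4 : rexp y ≤ (1 - y)⁻¹ := by
      rw [← one_div, le_div_iff₀ (by linarith)]; linarith
    have h5 : (1 - y)⁻¹ ≤ 1 + ε/2 := by
      rw [inv_eq_one_div, div_le_iff₀ (by linarith)]
      rw [hy]; nlinarith [hcube, hquart, mul_pos hε0 hε0]
    linarith
  have hsq : rexp (y/2) ≤ Real.sqrt (1 + ε/2) := by
    rw [show Real.sqrt (1 + ε/2) = Real.sqrt (1+ε/2) from rfl]
    have h6 : (rexp (y/2))^2 = rexp y := by
      rw [← Real.exp_nat_mul]; push_cast; congr 1; ring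
    rw [← Real.sqrt_sq (le_of_lt (Real.exp_pos (y/2))), h6]
    exact Real.sqrt_le_sqrt hkey
  have hinv : (Real.sqrt (1 + ε/2))⁻¹ ≤ (rexp (y/2))⁻¹ :=
    inv_anti₀ (Real.exp_pos _) hsq
  calc rexp ((ε/4)*(1-ε)^2) * (Real.sqrt (1 + ε/2))⁻¹
      ≤ rexp ((ε/4)*(1-ε)^2) * (rexp (y/2))⁻¹ := by
        apply mul_le_mul_of_nonneg_left hinv (le_of_lt (Real.exp_pos _))
    _ = rexp (-(ε^2)/8) := by
        rw [← Real.exp_neg, ← Real.exp_add]; congr 1; rw [hy]; ring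

theorem chernoff_vector
    {Ω : Type*} [MeasurableSpace Ω] (μ : Measure Ω) [IsProbabilityMeasure μ]
    (N M : ℕ) (hM : 0 < M)
    (Φ : Ω → Matrix (Fin M) (Fin N) ℝ)
    (hmeas : ∀ i j, Measurable fun ω => Φ ω i j)
    (hdist : ∀ i j, Measure.map (fun ω => Φ ω i j) μ
      = gaussianReal 0 (1 / (M : ℝ≥0)))
    (hindep : iIndepFun
      (fun (p : Fin M × Fin N) ω => Φ ω p.1 p.2) μ)
    (x : EuclideanSpace ℝ (Fin N)) (hx : x ≠ 0)
    (ε : ℝ) (hε0 : 0 < ε) (hε : ε < 1/2) :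
    μ {ω | ¬((1 - ε) * ‖x‖ ≤ Real.sqrt (∑ i, ((Φ ω).mulVec x i)^2) ∧
        Real.sqrt (∑ i, ((Φ ω).mulVec x i)^2) ≤ (1 + ε) * ‖x‖)} ≤
      ENNReal.ofReal (2 * rexp (-(ε^2) * M / 8)) := by
  classical
  set σ : ℝ := ‖x‖ with hσdef
  have hσ : 0 < σ := by rw [hσdef, norm_pos_iff]; exact hx
  set Y : Fin M → Ω → ℝ := fun i ω => (Φ ω).mulVec x i with hY
  have hYeq : ∀ i ω, Y i ω = ∑ j, Φ ω i j * x j := by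
    intro i ω; rw [hY]; rfl
  have hYm : ∀ i, Measurable (Y i) := by
    intro i
    have : (Y i) = fun ω => ∑ j, Φ ω i j * x j := by funext ω; exact hYeq i ω
    rw [this]
    exact Finset.measurable_sum _ (fun j _ => (hmeas i j).mul_const _)
  -- the scaled entry family
  set g : Fin M × Fin N → Ω → ℝ := fun p ω => Φ ω p.1 p.2 * x p.2 with hg
  have hgm : ∀ p, Measurable (g p) := fun p => (hmeas p.1 p.2).mul_const _
  have hgind : iIndepFun g μ := by
    have := hindep.comp (fun p (r : ℝ) => r * x p.2) (fun p => measurable_mul_const _)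
    exact this
  set vfun : Fin M × Fin N → ℝ≥0 :=
    fun p => (x p.2 ^ 2).toNNReal * (1 / (M:ℝ≥0)) with hvfun
  have hgd : ∀ p, Measure.map (g p) μ = gaussianReal 0 (vfun p) := by
    intro p
    have h1 : g p = (· * x p.2) ∘ (fun ω => Φ ω p.1 p.2) := rfl
    rw [h1, ← Measure.map_map (measurable_mul_const _) (hmeas p.1 p.2), hdist p.1 p.2,
      gaussianReal_map_mul_const (x p.2)]
    rw [mul_zero]
    congr 2
    exact NNReal.coe_injective (by simp [Real.coe_toNNReal _ (sq_nonneg (x p.2))])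
  set vv : ℝ≥0 := ∑ j : Fin N, (x j ^ 2).toNNReal * (1 / (M:ℝ≥0)) with hvvdef
  have hσsq : σ^2 = ∑ j, x j ^ 2 := by
    rw [hσdef, EuclideanSpace.norm_eq, Real.sq_sqrt (Finset.sum_nonneg fun j _ => sq_nonneg _)]
    congr 1; funext j; rw [Real.norm_eq_abs, sq_abs]
  have hvv : (vv : ℝ) = σ^2 / M := by
    rw [hvvdef, hσsq]
    push_cast
    rw [Finset.sum_div]
    congr 1; funext j
    rw [Real.coe_toNNReal _ (sq_nonneg (x j))]
    ring
  have hYdist : ∀ i, Measure.map (Y i) μ = gaussianReal 0 vv := by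
    intro i
    have h0 := map_sum_gaussian (μ := μ) g hgind hgm vfun hgd ({i} ×ˢ (Finset.univ : Finset (Fin N)))
    have h1 : (fun ω => ∑ p ∈ {i} ×ˢ (Finset.univ : Finset (Fin N)), g p ω) = Y i := by
      funext ω
      rw [Finset.sum_product, Finset.sum_singleton, hYeq i ω]
    have h2 : (∑ p ∈ {i} ×ˢ (Finset.univ : Finset (Fin N)), vfun p) = vv := by
      rw [Finset.sum_product, Finset.sum_singleton, hvvdef]
    rw [h1, h2] at h0
    exact h0
  -- pairwise independence of block sums
  have hpair : ∀ (s : Finset (Fin M)) (a : Fin M), a ∉ s →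
      IndepFun (fun ω => ∑ i ∈ s, Y i ω ^ 2) (fun ω => Y a ω ^ 2) μ := by
    intro s a ha
    set S' : Finset (Fin M × Fin N) := s ×ˢ Finset.univ with hS'
    set T' : Finset (Fin M × Fin N) := {a} ×ˢ Finset.univ with hT'
    have hd : Disjoint S' T' := by
      rw [Finset.disjoint_left]
      intro p hp hp'
      rw [hS', Finset.mem_product] at hp
      rw [hT', Finset.mem_product, Finset.mem_singleton] at hp'
      exact ha (hp'.1 ▸ hp.1)
    have h0 := hindep.indepFun_finset S' T' hd (fun p => hmeas p.1 p.2)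
    set φ : ({p // p ∈ S'} → ℝ) → ℝ :=
      fun c => ∑ i ∈ s.attach, (∑ j : Fin N,
        c ⟨((i : Fin M), j), Finset.mem_product.mpr ⟨i.2, Finset.mem_univ j⟩⟩ * x j)^2 with hφ
    set ψ : ({p // p ∈ T'} → ℝ) → ℝ :=
      fun c => (∑ j : Fin N,
        c ⟨(a, j), Finset.mem_product.mpr ⟨Finset.mem_singleton_self a, Finset.mem_univ j⟩⟩ * x j)^2 with hψ
    have hφm : Measurable φ := by
      apply Finset.measurable_sum
      intro i _
      apply Measurable.pow_const
      apply Finset.measurable_sum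
      intro j _
      exact (measurable_pi_apply _).mul_const _
    have hψm : Measurable ψ := by
      apply Measurable.pow_const
      apply Finset.measurable_sum
      intro j _
      exact (measurable_pi_apply _).mul_const _
    have h1 := h0.comp hφm hψm
    have e1 : φ ∘ (fun ω (p : {p // p ∈ S'}) => Φ ω (p : Fin M × Fin N).1 (p : Fin M × Fin N).2)
        = fun ω => ∑ i ∈ s, Y i ω ^ 2 := by
      funext ω
      simp only [Function.comp_apply, hφ]
      rw [← Finset.sum_attach s (fun i => Y i ω ^ 2)]
      refine Finset.sum_congr rfl fun i _ => ?_
      rw [hYeq]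
    have e2 : ψ ∘ (fun ω (p : {p // p ∈ T'}) => Φ ω (p : Fin M × Fin N).1 (p : Fin M × Fin N).2)
        = fun ω => Y a ω ^ 2 := by
      funext ω
      simp only [Function.comp_apply, hψ]
      rw [hYeq]
    rwa [e1, e2] at h1
  -- integrability and mgf for admissible t
  set I : ℝ → ℝ := fun t => ∫ z, rexp (t * z^2) ∂(gaussianReal 0 vv) with hI
  have hmain : ∀ (t : ℝ), 2 * t * vv < 1 → ∀ s : Finset (Fin M),
      Integrable (fun ω => rexp (t * ∑ i ∈ s, Y i ω ^ 2)) μ ∧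
      mgf (fun ω => ∑ i ∈ s, Y i ω ^ 2) μ t = (I t) ^ s.card := by
    intro t ht
    have hexpm : Measurable (fun z : ℝ => rexp (t * z^2)) := by measurability
    have hint : ∀ i, Integrable (fun ω => rexp (t * Y i ω ^ 2)) μ := by
      intro i
      have h2 := integrable_exp_sq_gaussian ht
      rw [← hYdist i] at h2
      exact (integrable_map_measure hexpm.aestronglyMeasurable (hYm i).aemeasurable).mp h2
    intro s
    induction s using Finset.induction_on with
    | empty =>
      constructor
      · simp only [Finset.sum_empty, mul_zero, Real.exp_zero]
        exact integrable_const 1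
      · simp [mgf]
    | @insert a s' ha ih =>
      set X : Ω → ℝ := fun ω => Y a ω ^ 2 with hX
      set Z : Ω → ℝ := fun ω => ∑ i ∈ s', Y i ω ^ 2 with hZ
      have hfun : (fun ω => ∑ i ∈ insert a s', Y i ω ^ 2) = X + Z := by
        funext ω
        rw [Finset.sum_insert ha]
        rfl
      have hiXZ : IndepFun X Z μ := (hpair s' a ha).symm
      constructor
      · have hfun2 : (fun ω => rexp (t * ∑ i ∈ insert a s', Y i ω ^ 2))
            = fun ω => rexp (t * (X + Z) ω) := by
          funext ω
          rw [show (∑ i ∈ insert a s', Y i ω ^ 2) = (X + Z) ω from congrFun hfun ω]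
        rw [hfun2]
        exact hiXZ.integrable_exp_mul_add (hint a) ih.1
      · rw [hfun, hiXZ.mgf_add (hint a).1 ih.1.1]
        have hmgfX : mgf X μ t = I t := by
          rw [mgf]
          simp only [hI]
          rw [← integral_map (hYm a).aemeasurable hexpm.aestronglyMeasurable, hYdist a]
        rw [hmgfX, ih.2, Finset.card_insert_of_notMem ha, pow_succ]
        ring
  -- thresholds
  set A : Ω → ℝ := fun ω => ∑ i, Y i ω ^ 2 with hA
  have hA0 : ∀ ω, 0 ≤ A ω := fun ω => Finset.sum_nonneg fun i _ => sq_nonneg _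
  set τ : ℝ := ε * M / (4 * σ^2) with hτ
  have hτpos : 0 < τ := by
    rw [hτ]
    positivity
  have hτvv : 2 * τ * (vv:ℝ) = ε / 2 := by
    rw [hτ, hvv]
    field_simp
    ring
  have hτvv' : 2 * τ * (vv:ℝ) < 1 := by rw [hτvv]; linarith
  have hτvvneg : 2 * (-τ) * (vv:ℝ) < 1 := by
    have : 2 * (-τ) * (vv:ℝ) = -(ε/2) := by rw [← hτvv]; ring
    rw [this]; linarith
  have hστ : τ * σ^2 = ε * M / 4 := by
    rw [hτ]; field_simp
  -- upper tail
  have hup : μ {ω | (1+ε)^2 * σ^2 ≤ A ω} ≤ ENNReal.ofReal (rexp (-(ε^2) * M / 8)) := by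
    have h1 := measure_ge_le_exp_mul_mgf (X := A) (μ := μ) ((1+ε)^2 * σ^2) (le_of_lt hτpos)
      ((hmain τ hτvv' Finset.univ).1)
    rw [(hmain τ hτvv' Finset.univ).2] at h1
    have hcard : (Finset.univ : Finset (Fin M)).card = M := by simp
    rw [hcard] at h1
    have hIτ : I τ = (Real.sqrt (1 - ε/2))⁻¹ := by
      simp only [hI]
      rw [integral_exp_sq_gaussian hτvv', hτvv]
    have hexp : rexp (-τ * ((1+ε)^2 * σ^2)) = (rexp (-(ε/4) * (1+ε)^2))^M := by
      rw [← Real.exp_nat_mul]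
      congr 1
      have : -τ * ((1+ε)^2 * σ^2) = -(τ * σ^2) * (1+ε)^2 := by ring
      rw [this, hστ]
      ring
    have h4 : (μ {ω | (1+ε)^2 * σ^2 ≤ A ω}).toReal ≤ rexp (-(ε^2) * M / 8) := by
      calc (μ {ω | (1+ε)^2 * σ^2 ≤ A ω}).toReal
          ≤ rexp (-τ * ((1+ε)^2 * σ^2)) * I τ ^ M := h1
        _ = (rexp (-(ε/4) * (1+ε)^2) * (Real.sqrt (1 - ε/2))⁻¹)^M := by
            rw [hIτ, hexp, mul_pow]
        _ ≤ (rexp (-(ε^2)/8))^M := pow_le_pow_left₀ (by positivity) (unit_up hε0 hε) M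
        _ = rexp (-(ε^2) * M / 8) := by rw [← Real.exp_nat_mul]; congr 1; ring
    rw [← ENNReal.ofReal_toReal (measure_ne_top μ _)]
    exact ENNReal.ofReal_le_ofReal h4
  -- lower tail
  have hlo : μ {ω | A ω ≤ (1-ε)^2 * σ^2} ≤ ENNReal.ofReal (rexp (-(ε^2) * M / 8)) := by
    have h1 := measure_le_le_exp_mul_mgf (X := A) (μ := μ) ((1-ε)^2 * σ^2)
      (le_of_lt (neg_neg_iff_pos.mpr hτpos)) ((hmain (-τ) hτvvneg Finset.univ).1)
    rw [(hmain (-τ) hτvvneg Finset.univ).2] at h1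
    have hcard : (Finset.univ : Finset (Fin M)).card = M := by simp
    rw [hcard] at h1
    have hIτ : I (-τ) = (Real.sqrt (1 + ε/2))⁻¹ := by
      simp only [hI]
      rw [integral_exp_sq_gaussian hτvvneg]
      congr 2
      have : 2 * (-τ) * (vv:ℝ) = -(ε/2) := by rw [← hτvv]; ring
      rw [this]; ring
    have hexp : rexp (-(-τ) * ((1-ε)^2 * σ^2)) = (rexp ((ε/4) * (1-ε)^2))^M := by
      rw [← Real.exp_nat_mul]
      congr 1
      have : -(-τ) * ((1-ε)^2 * σ^2) = (τ * σ^2) * (1-ε)^2 := by ring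
      rw [this, hστ]
      ring
    have h4 : (μ {ω | A ω ≤ (1-ε)^2 * σ^2}).toReal ≤ rexp (-(ε^2) * M / 8) := by
      calc (μ {ω | A ω ≤ (1-ε)^2 * σ^2}).toReal
          ≤ rexp (-(-τ) * ((1-ε)^2 * σ^2)) * I (-τ) ^ M := h1
        _ = (rexp ((ε/4) * (1-ε)^2) * (Real.sqrt (1 + ε/2))⁻¹)^M := by
            rw [hIτ, hexp, mul_pow]
        _ ≤ (rexp (-(ε^2)/8))^M := pow_le_pow_left₀ (by positivity) (unit_lo hε0 hε) M
        _ = rexp (-(ε^2) * M / 8) := by rw [← Real.exp_nat_mul]; congr 1; ring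
    rw [← ENNReal.ofReal_toReal (measure_ne_top μ _)]
    exact ENNReal.ofReal_le_ofReal h4
  -- inclusion
  have hsub : {ω | ¬((1 - ε) * ‖x‖ ≤ Real.sqrt (∑ i, ((Φ ω).mulVec x i)^2) ∧
        Real.sqrt (∑ i, ((Φ ω).mulVec x i)^2) ≤ (1 + ε) * ‖x‖)}
      ⊆ {ω | A ω ≤ (1-ε)^2 * σ^2} ∪ {ω | (1+ε)^2 * σ^2 ≤ A ω} := by
    intro ω hω
    simp only [Set.mem_setOf_eq] at hω
    have hAs : Real.sqrt (∑ i, ((Φ ω).mulVec x i)^2) = Real.sqrt (A ω) := rfl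
    rcases not_and_or.mp hω with h | h
    · left
      push_neg at h
      rw [hAs] at h
      have h5 : Real.sqrt (A ω) ≤ (1-ε) * σ := le_of_lt h
      have h6 : (Real.sqrt (A ω))^2 ≤ ((1-ε) * σ)^2 :=
        pow_le_pow_left₀ (Real.sqrt_nonneg _) h5 2
      rw [Real.sq_sqrt (hA0 ω)] at h6
      have : ((1-ε)*σ)^2 = (1-ε)^2 * σ^2 := by ring
      rw [this] at h6
      exact h6
    · right
      push_neg at h
      rw [hAs] at h
      have h5 : (1+ε) * σ ≤ Real.sqrt (A ω) := le_of_lt h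
      have h6 : ((1+ε) * σ)^2 ≤ (Real.sqrt (A ω))^2 :=
        pow_le_pow_left₀ (by positivity) h5 2
      rw [Real.sq_sqrt (hA0 ω)] at h6
      have : ((1+ε)*σ)^2 = (1+ε)^2 * σ^2 := by ring
      rw [this] at h6
      exact h6
  calc μ {ω | ¬((1 - ε) * ‖x‖ ≤ Real.sqrt (∑ i, ((Φ ω).mulVec x i)^2) ∧
        Real.sqrt (∑ i, ((Φ ω).mulVec x i)^2) ≤ (1 + ε) * ‖x‖)}
      ≤ μ ({ω | A ω ≤ (1-ε)^2 * σ^2} ∪ {ω | (1+ε)^2 * σ^2 ≤ A ω}) := measure_mono hsub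
    _ ≤ μ {ω | A ω ≤ (1-ε)^2 * σ^2} + μ {ω | (1+ε)^2 * σ^2 ≤ A ω} := measure_union_le _ _
    _ ≤ ENNReal.ofReal (rexp (-(ε^2) * M / 8)) + ENNReal.ofReal (rexp (-(ε^2) * M / 8)) :=
        add_le_add hlo hup
    _ = ENNReal.ofReal (2 * rexp (-(ε^2) * M / 8)) := by
        rw [← ENNReal.ofReal_add (by positivity) (by positivity)]
        congr 1; ring


/-- Johnson–Lindenstrauss lemma with i.i.d. Gaussian matrix. -/
theorem stmt_0
    {Ω : Type*} [MeasurableSpace Ω] (μ : Measure Ω) [IsProbabilityMeasure μ]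
    (N M : ℕ) (hM : 0 < M)
    (Φ : Ω → Matrix (Fin M) (Fin N) ℝ)
    (hmeas : ∀ i j, Measurable fun ω => Φ ω i j)
    (hdist : ∀ i j, Measure.map (fun ω => Φ ω i j) μ
      = gaussianReal 0 (1 / (M : ℝ≥0)))
    (hindep : iIndepFun
      (fun (p : Fin M × Fin N) ω => Φ ω p.1 p.2) μ)
    (S : Finset (EuclideanSpace ℝ (Fin N)))
    (Q : ℕ) (hQ : S.card = Q)
    (ε : ℝ) (hε0 : 0 < ε) (hε : ε < 1/2) :
    ENNReal.ofReal (1 - 2 * Q * Real.exp (-(ε^2) * M / 8)) ≤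
      μ {ω | ∀ x ∈ S,
        (1 - ε) * ‖x‖ ≤ Real.sqrt (∑ i, ((Φ ω).mulVec x i)^2) ∧
        Real.sqrt (∑ i, ((Φ ω).mulVec x i)^2) ≤ (1 + ε) * ‖x‖} := by
  classical
  set P : EuclideanSpace ℝ (Fin N) → Ω → Prop := fun x ω =>
    (1 - ε) * ‖x‖ ≤ Real.sqrt (∑ i, ((Φ ω).mulVec x i)^2) ∧
    Real.sqrt (∑ i, ((Φ ω).mulVec x i)^2) ≤ (1 + ε) * ‖x‖ with hP
  have hfm : ∀ x : EuclideanSpace ℝ (Fin N),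
      Measurable (fun ω => Real.sqrt (∑ i, ((Φ ω).mulVec x i)^2)) := by
    intro x
    apply Measurable.sqrt
    apply Finset.measurable_sum
    intro i _
    have : (fun ω => ((Φ ω).mulVec x i)^2) = fun ω => (∑ j, Φ ω i j * x j)^2 := rfl
    rw [this]
    exact (Finset.measurable_sum _ fun j _ => (hmeas i j).mul_const _).pow_const 2
  have hbad_meas : ∀ x : EuclideanSpace ℝ (Fin N), MeasurableSet {ω | ¬ P x ω} := by
    intro x
    have h1 : MeasurableSet {ω | P x ω} := by
      rw [hP]
      exact (measurableSet_le measurable_const (hfm x)).inter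
        (measurableSet_le (hfm x) measurable_const)
    exact h1.compl
  have hgood : {ω | ∀ x ∈ S, P x ω} = (⋃ x ∈ S, {ω | ¬ P x ω})ᶜ := by
    ext ω
    simp only [Set.mem_setOf_eq, Set.compl_iUnion, Set.mem_iInter, Set.mem_compl_iff,
      Set.mem_setOf_eq, not_not]
  have hbad_bound : ∀ x ∈ S, μ {ω | ¬ P x ω} ≤ ENNReal.ofReal (2 * rexp (-(ε^2) * M / 8)) := by
    intro x _
    rcases eq_or_ne x 0 with hx | hx
    · have : {ω | ¬ P x ω} = ∅ := by
        ext ω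
        simp only [Set.mem_setOf_eq, Set.mem_empty_iff_false, iff_false, not_not]
        subst hx
        have hz : ∀ i, (Φ ω).mulVec (0 : EuclideanSpace ℝ (Fin N)) i = 0 := by
          intro i
          show ∑ j, Φ ω i j * (0 : EuclideanSpace ℝ (Fin N)) j = 0
          simp
        rw [hP]
        simp only [hz]
        simp
      rw [this]
      simp
    · exact chernoff_vector μ N M hM Φ hmeas hdist hindep x hx ε hε0 hε
  have hunion : μ (⋃ x ∈ S, {ω | ¬ P x ω}) ≤ ENNReal.ofReal (2 * Q * rexp (-(ε^2) * M / 8)) := by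
    calc μ (⋃ x ∈ S, {ω | ¬ P x ω}) ≤ ∑ x ∈ S, μ {ω | ¬ P x ω} :=
          measure_biUnion_finset_le S _
      _ ≤ ∑ _x ∈ S, ENNReal.ofReal (2 * rexp (-(ε^2) * M / 8)) :=
          Finset.sum_le_sum hbad_bound
      _ = S.card • ENNReal.ofReal (2 * rexp (-(ε^2) * M / 8)) := by
          rw [Finset.sum_const]
      _ = ENNReal.ofReal (2 * Q * rexp (-(ε^2) * M / 8)) := by
          rw [hQ, nsmul_eq_mul, ← ENNReal.ofReal_natCast Q,
            ← ENNReal.ofReal_mul (by positivity)]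
          congr 1
          ring
  have hms : MeasurableSet (⋃ x ∈ S, {ω | ¬ P x ω}) :=
    S.measurableSet_biUnion (fun x _ => hbad_meas x)
  rw [hgood, measure_compl hms (measure_ne_top μ _), measure_univ]
  have h1 : ENNReal.ofReal (1 - 2 * Q * rexp (-(ε^2) * M / 8))
      = 1 - ENNReal.ofReal (2 * Q * rexp (-(ε^2) * M / 8)) := by
    rw [ENNReal.ofReal_sub _ (by positivity), ENNReal.ofReal_one]
  rw [h1]
  exact tsub_le_tsub_left hunion 1
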